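/- For four modes with k₁+k₂+k₃+k₄ = 0, the sum of the three pairings of perpendicular brackets reproduces the quartic vertex up to exact terms: B([ξ₁,ξ₂]^⊥, [ξ₃,ξ₄]^⊥) + B([ξ₃,ξ₁]^⊥, [ξ₂,ξ₄]^⊥) + B([ξ₁,ξ₄]^⊥, [ξ₂,ξ₃]^⊥) = −v₄ + (δ′v₃). -/

import Mathlib

namespace Stmt15

variable {V : Type*} [AddCommGroup V] [Module ℝ V]

/-- The perpendicular bracket of modes (polarization part). -/
def perpPol (B : LinearMap.BilinForm ℝ V) (p q : V × V) : V :=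
  B p.1 q.1 • (p.2 - q.2) + B p.1 p.2 • q.1 - B q.1 q.2 • p.1

/-- The cubic-vertex cochain `v₃` on three modes. -/
def v₃ (B : LinearMap.BilinForm ℝ V) (p q r : V × V) : ℝ :=
  B q.1 r.2 * B p.1 r.1 - B p.1 r.2 * B q.1 r.1
    + B r.1 p.2 * B q.1 p.1 - B q.1 p.2 * B r.1 p.1
    + B p.1 q.2 * B r.1 q.1 - B r.1 q.2 * B p.1 q.1

/-- The quartic-vertex cochain `v₄` on four modes. -/
def v₄ (B : LinearMap.BilinForm ℝ V) (m₁ m₂ m₃ m₄ : V × V) : ℝ :=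
  B (m₁.2 + m₂.2) (m₁.2 + m₂.2)
      * (B m₁.1 m₃.1 * B m₂.1 m₄.1 - B m₂.1 m₃.1 * B m₁.1 m₄.1)
    + B (m₂.2 + m₃.2) (m₂.2 + m₃.2)
      * (B m₂.1 m₁.1 * B m₃.1 m₄.1 - B m₃.1 m₁.1 * B m₂.1 m₄.1)
    + B (m₁.2 + m₃.2) (m₁.2 + m₃.2)
      * (B m₁.1 m₄.1 * B m₃.1 m₂.1 - B m₃.1 m₄.1 * B m₁.1 m₂.1)

/-- The operation `δ′` applied to a function of three modes. -/
def δ' (B : LinearMap.BilinForm ℝ V) (f : V × V → V × V → V × V → ℝ)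
    (m₁ m₂ m₃ m₄ : V × V) : ℝ :=
  B m₁.1 m₁.2 * f m₂ m₃ m₄ - B m₂.1 m₂.2 * f m₁ m₃ m₄
    + B m₃.1 m₃.2 * f m₁ m₂ m₄ - B m₄.1 m₄.2 * f m₁ m₂ m₃

/-- For four modes with `k₁+k₂+k₃+k₄ = 0`, the sum of the three pairings of
perpendicular brackets reproduces the quartic vertex up to exact terms:
`B([ξ₁,ξ₂]^⊥,[ξ₃,ξ₄]^⊥) + B([ξ₃,ξ₁]^⊥,[ξ₂,ξ₄]^⊥) + B([ξ₁,ξ₄]^⊥,[ξ₂,ξ₃]^⊥)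
  = −v₄ + δ′v₃`. -/
theorem perp_pairings_eq_v₄ (B : LinearMap.BilinForm ℝ V) (hB : B.IsSymm)
    (ξ₁ k₁ ξ₂ k₂ ξ₃ k₃ ξ₄ k₄ : V) (h : k₁ + k₂ + k₃ + k₄ = 0) :
    B (perpPol B (ξ₁, k₁) (ξ₂, k₂)) (perpPol B (ξ₃, k₃) (ξ₄, k₄))
      + B (perpPol B (ξ₃, k₃) (ξ₁, k₁)) (perpPol B (ξ₂, k₂) (ξ₄, k₄))
      + B (perpPol B (ξ₁, k₁) (ξ₄, k₄)) (perpPol B (ξ₂, k₂) (ξ₃, k₃))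
      = -v₄ B (ξ₁, k₁) (ξ₂, k₂) (ξ₃, k₃) (ξ₄, k₄)
        + δ' B (v₃ B) (ξ₁, k₁) (ξ₂, k₂) (ξ₃, k₃) (ξ₄, k₄) := by
  have hk : k₄ = -k₁ - k₂ - k₃ := by rw [eq_neg_of_add_eq_zero_right h]; abel
  subst hk
  have hs : ∀ x y : V, B x y = B y x := fun x y => hB.eq x y
  simp only [perpPol, v₃, v₄, δ', map_add, map_sub, map_neg, map_smul,
    LinearMap.add_apply, LinearMap.sub_apply, LinearMap.neg_apply,
    LinearMap.smul_apply, smul_eq_mul]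
  simp only [hs ξ₂ ξ₁, hs ξ₃ ξ₁, hs ξ₄ ξ₁, hs k₁ ξ₁, hs k₂ ξ₁, hs k₃ ξ₁, hs ξ₃ ξ₂,
    hs ξ₄ ξ₂, hs k₁ ξ₂, hs k₂ ξ₂, hs k₃ ξ₂, hs ξ₄ ξ₃, hs k₁ ξ₃, hs k₂ ξ₃,
    hs k₃ ξ₃, hs k₁ ξ₄, hs k₂ ξ₄, hs k₃ ξ₄, hs k₂ k₁, hs k₃ k₁, hs k₃ k₂]
  ring

end Stmt15
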